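/- Let H be a real Hilbert space, k₁,…,kₙ ∈ H, f ∈ H, λ > 0, and set yᵢ := ⟪f, kᵢ⟫ for i = 1,…,n. Suppose s ∈ H minimizes J(g) := Σ_{i=1}^n (⟪g,kᵢ⟫ − yᵢ)² + λ‖g‖² over H. Then |⟪s, kᵢ⟫ − yᵢ| ≤ √λ · ‖f‖ for every i = 1,…,n. -/
import Mathlib

open scoped RealInnerProductSpace

/-- Pointwise training error bound for regularized interpolation:
`|⟪s, kᵢ⟫ − yᵢ| ≤ √λ ‖f‖`. -/
theorem stmt_9 {H : Type*} [NormedAddCommGroup H] [InnerProductSpace ℝ H]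
    (n : ℕ) (k : Fin n → H) (f : H) (lam : ℝ) (hlam : 0 < lam)
    (y : Fin n → ℝ) (hy : ∀ i, y i = ⟪f, k i⟫)
    (J : H → ℝ)
    (hJ : ∀ g, J g = (∑ i, (⟪g, k i⟫ - y i) ^ 2) + lam * ‖g‖ ^ 2)
    (s : H) (hs : ∀ g, J s ≤ J g) :
    ∀ i, |⟪s, k i⟫ - y i| ≤ Real.sqrt lam * ‖f‖ := by
  intro i
  have hJf : J f = lam * ‖f‖ ^ 2 := by
    rw [hJ]
    have : ∀ j, (⟪f, k j⟫ - y j) ^ 2 = 0 := by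
      intro j; rw [hy j]; ring
    simp [this]
  have hterm : (⟪s, k i⟫ - y i) ^ 2 ≤ lam * ‖f‖ ^ 2 := by
    have h1 : (⟪s, k i⟫ - y i) ^ 2 ≤ ∑ j, (⟪s, k j⟫ - y j) ^ 2 :=
      Finset.single_le_sum (f := fun j => (⟪s, k j⟫ - y j) ^ 2) (fun j _ => sq_nonneg _) (Finset.mem_univ i)
    have h2 : (∑ j, (⟪s, k j⟫ - y j) ^ 2) ≤ J s := by
      rw [hJ]
      nlinarith [norm_nonneg s, sq_nonneg ‖s‖, hlam.le,
        mul_nonneg hlam.le (sq_nonneg ‖s‖)]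
    have h3 := hs f
    rw [hJf] at h3
    linarith
  have h4 : |⟪s, k i⟫ - y i| ≤ Real.sqrt (lam * ‖f‖ ^ 2) := by
    rw [← Real.sqrt_sq_eq_abs]
    exact Real.sqrt_le_sqrt hterm
  calc |⟪s, k i⟫ - y i| ≤ Real.sqrt (lam * ‖f‖ ^ 2) := h4
    _ = Real.sqrt lam * ‖f‖ := by
        rw [Real.sqrt_mul hlam.le, Real.sqrt_sq (norm_nonneg f)]
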